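/- Let R be the quotient of the polynomial ring (ℤ/2)[u, a, τ_0, τ_1, τ_2, …] by the ideal generated by τ_i² − τ_{i+1}·a for all i ≥ 0. Then for all natural numbers i ≥ 1 and j ≥ 0, the element (τ_{i−1} · (u + τ_0·a)^{2^{i−1} − 1})^{2^j} − τ_{i+j−1} · u^{2^{i+j−1} − 2^j} · a^{2^j − 1} of R lies in the principal ideal of R generated by a^{2^j}. -/

import Mathlib

noncomputable section

open MvPolynomial

/-- The polynomial ring `(ℤ/2)[u, a, τ₀, τ₁, τ₂, …]`:
`Sum.inr false ↦ u`, `Sum.inr true ↦ a`, `Sum.inl i ↦ τᵢ`. -/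
abbrev LambdaPoly : Type := MvPolynomial (ℕ ⊕ Bool) (ZMod 2)

/-- The variable `u` (the class `u_σ`). -/
def uP : LambdaPoly := X (Sum.inr false)

/-- The variable `a` (the class `a_σ`). -/
def aP : LambdaPoly := X (Sum.inr true)

/-- The variable `τᵢ`. -/
def tauP (i : ℕ) : LambdaPoly := X (Sum.inl i)

/-- The ideal generated by the relations `τᵢ² = τ_{i+1} a`. -/
def tauRel : Ideal LambdaPoly :=
  Ideal.span {x | ∃ i : ℕ, x = tauP i ^ 2 - tauP (i + 1) * aP}

/-- The ring `R = (ℤ/2)[u, a, τ₀, τ₁, …]/(τᵢ² = τ_{i+1} a)`, modeling the nonnegative cone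
of `Λ^m_⋆`. -/
abbrev LambdaRing : Type := LambdaPoly ⧸ tauRel

/-- The quotient map onto `R`. -/
def toLambdaRing : LambdaPoly →+* LambdaRing := Ideal.Quotient.mk tauRel

set_option synthInstance.maxHeartbeats 1000000 in
set_option maxHeartbeats 1000000 in
/-- Theorem 5.1 of the paper: in `R = (ℤ/2)[u, a, τᵢ]/(τᵢ² = τ_{i+1} a)`, for `i ≥ 1` and
`j ≥ 0`, the image of `ζᵢ^(2ʲ)`, namely `(τ_{i-1} (u + τ₀ a)^(2^(i-1) - 1))^(2ʲ)`, agrees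
with `τ_{i+j-1} · u^(2^(i+j-1) - 2ʲ) · a^(2ʲ - 1)` modulo higher powers of `a`, i.e. modulo
the principal ideal generated by `a^(2ʲ)`. -/
theorem zeta_pow_image_mod_higher_a (i j : ℕ) (hi : 1 ≤ i) :
    (toLambdaRing (tauP (i - 1)) *
          (toLambdaRing uP + toLambdaRing (tauP 0) * toLambdaRing aP) ^ (2 ^ (i - 1) - 1)) ^
        (2 ^ j) -
      toLambdaRing (tauP (i + j - 1)) * toLambdaRing uP ^ (2 ^ (i + j - 1) - 2 ^ j) *
        toLambdaRing aP ^ (2 ^ j - 1) ∈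
    Ideal.span {toLambdaRing aP ^ (2 ^ j)} := by
  classical
  -- abbreviations
  set I : Ideal LambdaRing := Ideal.span {toLambdaRing aP ^ (2 ^ j)} with hI
  rw [← Ideal.Quotient.eq]
  set Q : LambdaRing →+* LambdaRing ⧸ I := Ideal.Quotient.mk I with hQ
  -- characteristic two
  have h2P : (2 : LambdaPoly) = 0 := by
    have h := (map_ofNat (MvPolynomial.C : ZMod 2 →+* LambdaPoly) 2).symm
    rw [h, show (2 : ZMod 2) = 0 from rfl, map_zero]
  have h2 : (2 : LambdaRing ⧸ I) = 0 := by
    have : (2 : LambdaRing ⧸ I) = Q (toLambdaRing (2 : LambdaPoly)) := by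
      rw [map_ofNat, map_ofNat]
    rw [this, h2P, map_zero, map_zero]
  -- tau relation in the quotient ring
  have tau_sq : ∀ k : ℕ,
      toLambdaRing (tauP k) ^ 2 = toLambdaRing (tauP (k + 1)) * toLambdaRing aP := by
    intro k
    have hmem : tauP k ^ 2 - tauP (k + 1) * aP ∈ tauRel := Ideal.subset_span ⟨k, rfl⟩
    have h := Ideal.Quotient.eq.mpr hmem
    simpa [toLambdaRing, map_pow, map_mul] using h
  -- iterated tau relation
  have tau_pow : ∀ (m k : ℕ),
      toLambdaRing (tauP k) ^ (2 ^ m) =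
        toLambdaRing (tauP (k + m)) * toLambdaRing aP ^ (2 ^ m - 1) := by
    intro m
    induction m with
    | zero => intro k; simp
    | succ m ih =>
      intro k
      have h1 : (1 : ℕ) ≤ 2 ^ m := Nat.one_le_two_pow
      have e1 : 2 ^ (m + 1) = 2 ^ m * 2 := by ring
      rw [e1, pow_mul, ih k, mul_pow, ← pow_mul, tau_sq]
      rw [show k + (m + 1) = k + m + 1 from rfl]
      have e2 : (2 ^ m - 1) * 2 = 2 ^ m * 2 - 2 := by omega
      have e3 : 2 ^ m * 2 - 1 = 1 + (2 ^ m * 2 - 2) := by omega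
      rw [e2, e3, pow_add, pow_one]
      ring
  -- a ^ 2^j vanishes in the double quotient
  have ha : Q (toLambdaRing aP) ^ (2 ^ j) = 0 := by
    rw [← map_pow, hQ, Ideal.Quotient.eq_zero_iff_mem]
    exact Ideal.subset_span rfl
  -- Frobenius in characteristic two
  have frob : ∀ (x y : LambdaRing ⧸ I) (n : ℕ),
      (x + y) ^ (2 ^ n) = x ^ (2 ^ n) + y ^ (2 ^ n) := by
    intro x y n
    induction n with
    | zero => simp
    | succ n ih =>
      have e1 : 2 ^ (n + 1) = 2 ^ n * 2 := by ring
      have sq2 : ∀ a b : LambdaRing ⧸ I, (a + b) ^ 2 = a ^ 2 + b ^ 2 := by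
        intro a b
        have : (a + b) ^ 2 = a ^ 2 + 2 * (a * b) + b ^ 2 := by ring
        rw [this, h2]; ring
      rw [e1, pow_mul, ih, sq2, ← pow_mul, ← pow_mul, ← e1]
  -- now compute
  simp only [map_pow, map_mul, map_add]
  rw [mul_pow (M := LambdaRing ⧸ I), ← pow_mul, mul_comm (2 ^ (i - 1) - 1) (2 ^ j), pow_mul,
    frob (Q (toLambdaRing uP)) (Q (toLambdaRing (tauP 0)) * Q (toLambdaRing aP)) j,
    mul_pow (M := LambdaRing ⧸ I), ha, mul_zero (M₀ := LambdaRing ⧸ I), add_zero (M := LambdaRing ⧸ I), ← pow_mul (M := LambdaRing ⧸ I)]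
  have := tau_pow j (i - 1)
  have hT : Q (toLambdaRing (tauP (i - 1))) ^ 2 ^ j =
      Q (toLambdaRing (tauP (i + j - 1))) * Q (toLambdaRing aP) ^ (2 ^ j - 1) := by
    rw [← map_pow, this]
    have : i - 1 + j = i + j - 1 := by omega
    rw [this, map_mul, map_pow]
  rw [hT]
  have hexp : 2 ^ j * (2 ^ (i - 1) - 1) = 2 ^ (i + j - 1) - 2 ^ j := by
    have h1 : (1 : ℕ) ≤ 2 ^ (i - 1) := Nat.one_le_two_pow
    have e : 2 ^ j * 2 ^ (i - 1) = 2 ^ (i + j - 1) := by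
      rw [← pow_add]; congr 1; omega
    rw [Nat.mul_sub, mul_one, e]
  rw [hexp]
  ring

end
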